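/- arXiv:1404.3244 — 2 statements merged into one kernel-verified Lean document; each statement's English description precedes it below -/
import Mathlib

section
/- Let G be a finite connected bipartite simple graph with parts A and B, so that every edge of G joins a vertex of A to a vertex of B, and assume no vertex of G has valency larger than 3. Let n be the cardinality of B and let r be the number of endpoints of G lying in B. Then 4r ≤ 3(n + 1). -/
open Finset

/-- A connected graph on a finite vertex type has at least `card V - 1` edges. -/
lemma connected_card_le_edges {V : Type*} [Fintype V] [DecidableEq V]
    (G : SimpleGraph V) [DecidableRel G.Adj] (hconn : G.Connected) :
    Fintype.card V ≤ G.edgeFinset.card + 1 := by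
  obtain ⟨v0⟩ := hconn.nonempty
  have key : ∀ v, v ≠ v0 → ∃ w, G.Adj v w ∧ G.dist v0 w + 1 = G.dist v0 v := by
    intro v hv
    obtain ⟨p, hp⟩ := hconn.exists_walk_length_eq_dist v0 v
    obtain ⟨w, hadj, q, hq⟩ := SimpleGraph.Walk.exists_eq_cons_of_ne hv p.reverse
    refine ⟨w, hadj, le_antisymm ?_ ?_⟩
    · have h1 : G.dist v0 w ≤ q.reverse.length := SimpleGraph.dist_le _
      have h2 : p.reverse.length = q.length + 1 := by rw [hq]; simp
      have h3 : p.reverse.length = p.length := SimpleGraph.Walk.length_reverse _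
      simp only [SimpleGraph.Walk.length_reverse] at h1
      omega
    · calc G.dist v0 v ≤ G.dist v0 w + G.dist w v := hconn.dist_triangle
        _ = G.dist v0 w + 1 := by
            rw [SimpleGraph.dist_eq_one_iff_adj.2 hadj.symm]
  choose! w hadj hdist using key
  have hinj : Set.InjOn (fun v => s(v, w v)) (Finset.univ.erase v0 : Finset V) := by
    intro x hx y hy hxy
    simp only [Finset.coe_erase, Set.mem_diff, Finset.mem_coe, Finset.mem_univ,
      Set.mem_singleton_iff] at hx hy
    have hx' : x ≠ v0 := by simpa using hx
    have hy' : y ≠ v0 := by simpa using hy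
    simp only [Sym2.eq, Sym2.rel_iff', Prod.mk.injEq, Prod.swap_prod_mk] at hxy
    rcases hxy with ⟨h1, _⟩ | ⟨h1, h2⟩
    · exact h1
    · exfalso
      have d1 := hdist x hx'
      have d2 := hdist y hy'
      rw [← h1] at d2
      rw [h2] at d1
      omega
  have hmaps : ∀ v ∈ Finset.univ.erase v0, s(v, w v) ∈ G.edgeFinset := by
    intro v hv
    rw [SimpleGraph.mem_edgeFinset, SimpleGraph.mem_edgeSet]
    exact hadj v (Finset.ne_of_mem_erase hv)
  have hcard := Finset.card_le_card_of_injOn _ hmaps hinj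
  rw [Finset.card_erase_of_mem (Finset.mem_univ v0), Finset.card_univ] at hcard
  omega

/-- Let `G` be a finite connected bipartite simple graph with parts `A`
and `B`, so that every edge of `G` joins a vertex of `A` to a vertex of `B`, and assume no
vertex of `G` has valency larger than 3. Let `n` be the cardinality of `B` and `r` the
number of endpoints of `G` lying in `B`. Then `4 * r ≤ 3 * (n + 1)`. -/
theorem endpoints_le_in_bipartite_cubic_graph {V : Type*} [Fintype V] [DecidableEq V]
    (G : SimpleGraph V) [DecidableRel G.Adj]
    (A B : Finset V) (hdisj : Disjoint A B) (hcover : A ∪ B = Finset.univ)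
    (hbip : ∀ u v, G.Adj u v → (u ∈ A ∧ v ∈ B) ∨ (u ∈ B ∧ v ∈ A))
    (hconn : G.Connected) (hdeg : ∀ v, G.degree v ≤ 3)
    (n r : ℕ)
    (hn : n = B.card)
    (hr : r = (B.filter fun v => G.degree v = 1).card) :
    4 * r ≤ 3 * (n + 1) := by
  classical
  -- degree as an indicator sum over the whole vertex set
  have hdeg_sum : ∀ v : V, G.degree v = ∑ u ∈ A, (if G.Adj v u then 1 else 0)
      + ∑ u ∈ B, (if G.Adj v u then 1 else 0) := by
    intro v
    rw [← Finset.sum_union hdisj, hcover, ← Finset.card_filter]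
    rw [SimpleGraph.degree, SimpleGraph.neighborFinset_eq_filter]
  -- a vertex of `A` has no neighbors in `A`, and similarly for `B`
  have hAA : ∀ v ∈ A, ∑ u ∈ A, (if G.Adj v u then 1 else 0) = 0 := by
    intro v hv
    refine Finset.sum_eq_zero fun u hu => ?_
    have : ¬ G.Adj v u := by
      intro h
      rcases hbip v u h with ⟨_, huB⟩ | ⟨hvB, _⟩
      · exact (Finset.disjoint_left.1 hdisj hu) huB
      · exact (Finset.disjoint_left.1 hdisj hv) hvB
    simp [this]
  have hBB : ∀ v ∈ B, ∑ u ∈ B, (if G.Adj v u then 1 else 0) = 0 := by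
    intro v hv
    refine Finset.sum_eq_zero fun u hu => ?_
    have : ¬ G.Adj v u := by
      intro h
      rcases hbip v u h with ⟨hvA, _⟩ | ⟨_, huA⟩
      · exact (Finset.disjoint_left.1 hdisj hvA) hv
      · exact (Finset.disjoint_left.1 hdisj huA) hu
    simp [this]
  -- the degree sums over `A` and over `B` agree
  have hsum_eq : ∑ v ∈ A, G.degree v = ∑ v ∈ B, G.degree v := by
    have h1 : ∑ v ∈ A, G.degree v
        = ∑ v ∈ A, ∑ u ∈ B, (if G.Adj v u then 1 else 0) := by
      refine Finset.sum_congr rfl fun v hv => ?_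
      rw [hdeg_sum v, hAA v hv, zero_add]
    have h2 : ∑ v ∈ B, G.degree v
        = ∑ v ∈ B, ∑ u ∈ A, (if G.Adj v u then 1 else 0) := by
      refine Finset.sum_congr rfl fun v hv => ?_
      rw [hdeg_sum v, hBB v hv, add_zero]
    rw [h1, h2, Finset.sum_comm]
    refine Finset.sum_congr rfl fun v _ => Finset.sum_congr rfl fun u _ => ?_
    simp only [SimpleGraph.adj_comm]
  -- total degree sum is twice the number of edges
  have htwice : ∑ v ∈ A, G.degree v + ∑ v ∈ B, G.degree v = 2 * G.edgeFinset.card := by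
    rw [← Finset.sum_union hdisj, hcover]
    exact G.sum_degrees_eq_twice_card_edges
  -- bound the degree sum over `A`
  have hA_le : ∑ v ∈ A, G.degree v ≤ 3 * A.card := by
    calc ∑ v ∈ A, G.degree v ≤ ∑ _v ∈ A, 3 := Finset.sum_le_sum fun v _ => hdeg v
      _ = 3 * A.card := by rw [Finset.sum_const, smul_eq_mul, mul_comm]
  -- bound the degree sum over `B`, accounting for the endpoints
  have hsub : (B.filter fun v => G.degree v = 1) ⊆ B := Finset.filter_subset _ _
  have hrn : r ≤ n := by rw [hr, hn]; exact Finset.card_le_card hsub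
  have hB_le : ∑ v ∈ B, G.degree v ≤ r + 3 * (n - r) := by
    rw [← Finset.sum_filter_add_sum_filter_not B (fun v => G.degree v = 1)]
    have e1 : ∑ v ∈ B.filter (fun v => G.degree v = 1), G.degree v = r := by
      rw [hr]
      rw [Finset.sum_congr rfl (fun v hv => (Finset.mem_filter.1 hv).2)]
      simp
    have e2 : ∑ v ∈ B.filter (fun v => ¬ G.degree v = 1), G.degree v ≤ 3 * (n - r) := by
      calc ∑ v ∈ B.filter (fun v => ¬ G.degree v = 1), G.degree v
          ≤ ∑ _v ∈ B.filter (fun v => ¬ G.degree v = 1), 3 :=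
            Finset.sum_le_sum fun v _ => hdeg v
        _ = 3 * (B.filter (fun v => ¬ G.degree v = 1)).card := by
            rw [Finset.sum_const, smul_eq_mul, mul_comm]
        _ = 3 * (n - r) := by
            rw [hn, hr, Finset.filter_not, Finset.card_sdiff_of_subset hsub]
    omega
  -- connectivity: at least `card V - 1` edges
  have hconn_card := connected_card_le_edges G hconn
  have hcardV : A.card + B.card = Fintype.card V := by
    rw [← Finset.card_union_of_disjoint hdisj, hcover, Finset.card_univ]
  rw [← hn] at hcardV
  omega
end

section
/- Let G be a finite connected bipartite simple graph with parts A and B, so that every edge of G joins a vertex of A to a vertex of B, and assume no vertex of G has valency larger than 3. Let n be the cardinality of B and let r be the number of endpoints of G lying in B. If 4r = 3(n + 1), then G is a tree, every vertex in A has valency 3, and every vertex in B has valency 3 or 1. -/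
open SimpleGraph Finset

private lemma aux_card_le {V : Type*} [Fintype V] [DecidableEq V] (G : SimpleGraph V)
    [Fintype G.edgeSet] (h : G.Connected) :
    Fintype.card V ≤ G.edgeFinset.card + 1 := by
  have hne := h.nonempty
  inhabit V
  choose f hf using fun w => (h w default).exists_walk_length_eq_dist
  have key : ∀ w : V, w ≠ default → ¬ (f w).Nil := by
    intro w hw
    rw [SimpleGraph.Walk.not_nil_iff_lt_length, hf]
    exact h.pos_dist_of_ne hw
  have hdec : ∀ w : V, w ≠ default →
      G.dist ((f w).getVert 1) default < G.dist w default := by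
    intro w hw
    have h1 := SimpleGraph.dist_le ((f w).tail)
    have h2 : ((f w).tail).length + 1 = (f w).length :=
      SimpleGraph.Walk.length_tail_add_one (key w hw)
    have h3 : 0 < G.dist w default := h.pos_dist_of_ne hw
    have h4 := hf w
    simp only [SimpleGraph.Walk.snd] at h1
    omega
  have hcard : (Finset.univ.erase (default : V)).card ≤ G.edgeFinset.card := by
    apply Finset.card_le_card_of_injOn
      (fun w => if hw : w = default then s(default, default)
        else ((f w).firstDart (key w hw)).edge)
    · intro w hw
      simp only [Finset.mem_coe, Finset.mem_erase] at hw
      beta_reduce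
      rw [dif_neg hw.1]
      rw [Finset.mem_coe, SimpleGraph.mem_edgeFinset]
      exact ((f w).firstDart (key w hw.1)).edge_mem
    · intro a ha b hb hab
      simp only [Finset.coe_erase, Set.mem_diff, Finset.coe_univ, Set.mem_univ,
        Set.mem_singleton_iff, true_and] at ha hb
      simp only [dif_neg ha, dif_neg hb] at hab
      rw [SimpleGraph.Walk.edge_firstDart, SimpleGraph.Walk.edge_firstDart,
        Sym2.eq_iff] at hab
      rcases hab with ⟨h1, _⟩ | ⟨h1, h2⟩
      · exact h1
      · exfalso
        have d1 := hdec a ha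
        have d2 := hdec b hb
        simp only [SimpleGraph.Walk.snd] at h1 h2
        rw [h2] at d1
        rw [← h1] at d2
        omega
  have : (Finset.univ.erase (default : V)).card = Fintype.card V - 1 := by
    rw [Finset.card_erase_of_mem (Finset.mem_univ _), Finset.card_univ]
  have hpos : 0 < Fintype.card V := Fintype.card_pos
  omega

private lemma aux_del_conn {V : Type*} {G : SimpleGraph V} {v w : V} (h : G.Connected)
    (hr : (G \ SimpleGraph.fromEdgeSet {s(v, w)}).Reachable v w) :
    (G \ SimpleGraph.fromEdgeSet {s(v, w)}).Connected := by
  rw [SimpleGraph.connected_iff]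
  refine ⟨fun a b => ?_, h.nonempty⟩
  obtain ⟨p⟩ := h a b
  induction p with
  | nil => exact SimpleGraph.Reachable.refl _
  | @cons u c d hadj p ih =>
    refine SimpleGraph.Reachable.trans ?_ ih
    by_cases he : s(u, c) = s(v, w)
    · rw [Sym2.eq_iff] at he
      rcases he with ⟨h1, h2⟩ | ⟨h1, h2⟩
      · subst h1; subst h2; exact hr
      · subst h1; subst h2; exact hr.symm
    · apply SimpleGraph.Adj.reachable
      simp only [SimpleGraph.sdiff_adj, SimpleGraph.fromEdgeSet_adj, Set.mem_singleton_iff]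
      exact ⟨hadj, fun hc => he hc.1⟩

private lemma aux_acyclic {V : Type*} [Fintype V] [DecidableEq V] (G : SimpleGraph V)
    [DecidableRel G.Adj] (h : G.Connected)
    (hcard : G.edgeFinset.card + 1 ≤ Fintype.card V) : G.IsAcyclic := by
  intro u p hp
  classical
  have hlen : 3 ≤ p.length := hp.three_le_length
  have hne : p.edges ≠ [] := by
    intro hnil
    have := p.length_edges
    rw [hnil] at this
    simp at this
    omega
  obtain ⟨e, he⟩ := List.exists_mem_of_ne_nil _ hne
  induction e with
  | _ v w =>
  have hkey := SimpleGraph.adj_and_reachable_delete_edges_iff_exists_cycle.mpr ⟨u, p, hp, he⟩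
  set G' := G \ SimpleGraph.fromEdgeSet {s(v, w)} with hG'
  have hc' : G'.Connected := aux_del_conn h hkey.2
  haveI : Fintype G'.edgeSet := G.fintypeEdgeSetSdiff _
  have h1 : Fintype.card V ≤ G'.edgeFinset.card + 1 := aux_card_le G' hc'
  have h2 : G'.edgeFinset.card < G.edgeFinset.card := by
    apply Finset.card_lt_card
    rw [Finset.ssubset_iff_of_subset]
    · refine ⟨s(v, w), ?_, ?_⟩
      · rw [SimpleGraph.mem_edgeFinset]; exact hkey.1
      · rw [SimpleGraph.mem_edgeFinset]
        simp [hG', SimpleGraph.fromEdgeSet_adj, hkey.1.ne]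
    · intro e' he'
      rw [SimpleGraph.mem_edgeFinset] at he' ⊢
      exact SimpleGraph.edgeSet_mono sdiff_le he'
  omega

private lemma aux_sum_deg {V : Type*} [Fintype V] [DecidableEq V] (G : SimpleGraph V)
    [DecidableRel G.Adj] (A B : Finset V) (hdisj : Disjoint A B)
    (hbip : ∀ u v, G.Adj u v → (u ∈ A ∧ v ∈ B) ∨ (u ∈ B ∧ v ∈ A)) :
    ∑ v ∈ B, G.degree v = G.edgeFinset.card := by
  calc ∑ v ∈ B, G.degree v
      = ∑ v ∈ B, (G.edgeFinset.filter (fun e => v ∈ e)).card := by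
        refine Finset.sum_congr rfl fun v _ => ?_
        rw [← SimpleGraph.card_incidenceFinset_eq_degree,
          SimpleGraph.incidenceFinset_eq_filter]
    _ = ∑ v ∈ B, ∑ e ∈ G.edgeFinset, if v ∈ e then 1 else 0 :=
        Finset.sum_congr rfl fun v _ => Finset.card_filter _ _
    _ = ∑ e ∈ G.edgeFinset, ∑ v ∈ B, if v ∈ e then 1 else 0 := Finset.sum_comm
    _ = ∑ e ∈ G.edgeFinset, (B.filter (fun v => v ∈ e)).card :=
        Finset.sum_congr rfl fun e _ => (Finset.card_filter _ _).symm
    _ = ∑ e ∈ G.edgeFinset, 1 := by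
        refine Finset.sum_congr rfl fun e he => ?_
        rw [SimpleGraph.mem_edgeFinset] at he
        induction e with
        | _ x y =>
          rcases hbip x y he with ⟨hxA, hyB⟩ | ⟨hxB, hyA⟩
          · have hxB : x ∉ B := fun hc => (Finset.disjoint_left.mp hdisj hxA) hc
            rw [Finset.card_eq_one]
            refine ⟨y, ?_⟩
            ext z
            simp only [Finset.mem_filter, Sym2.mem_iff, Finset.mem_singleton]
            constructor
            · rintro ⟨hz, rfl | rfl⟩
              · exact absurd hz hxB
              · rfl
            · rintro rfl; exact ⟨hyB, Or.inr rfl⟩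
          · have hyB : y ∉ B := fun hc => (Finset.disjoint_left.mp hdisj hyA) hc
            rw [Finset.card_eq_one]
            refine ⟨x, ?_⟩
            ext z
            simp only [Finset.mem_filter, Sym2.mem_iff, Finset.mem_singleton]
            constructor
            · rintro ⟨hz, rfl | rfl⟩
              · rfl
              · exact absurd hz hyB
            · rintro rfl; exact ⟨hxB, Or.inl rfl⟩
    _ = G.edgeFinset.card := by simp

private lemma aux_all_three {V : Type*} (s : Finset V) (f : V → ℕ)
    (hle : ∀ v ∈ s, f v ≤ 3) (hsum : 3 * s.card ≤ ∑ v ∈ s, f v) :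
    ∀ v ∈ s, f v = 3 := by
  intro v hv
  by_contra hne
  have hlt : ∑ x ∈ s, f x < ∑ _x ∈ s, 3 :=
    Finset.sum_lt_sum hle ⟨v, hv, lt_of_le_of_ne (hle v hv) hne⟩
  rw [Finset.sum_const, smul_eq_mul, mul_comm] at hlt
  omega

/-- Let `G` be a finite connected bipartite simple graph with parts `A`
and `B`, so that every edge of `G` joins a vertex of `A` to a vertex of `B`, and assume no
vertex of `G` has valency larger than 3. Let `n` be the cardinality of `B` and `r` the
number of endpoints of `G` lying in `B`. If `4 * r = 3 * (n + 1)`, then `G` is a tree,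
every vertex in `A` has valency 3, and every vertex in `B` has valency 3 or 1. -/
theorem tree_of_equality_in_bipartite_cubic_graph {V : Type*} [Fintype V] [DecidableEq V]
    (G : SimpleGraph V) [DecidableRel G.Adj]
    (A B : Finset V) (hdisj : Disjoint A B) (hcover : A ∪ B = Finset.univ)
    (hbip : ∀ u v, G.Adj u v → (u ∈ A ∧ v ∈ B) ∨ (u ∈ B ∧ v ∈ A))
    (hconn : G.Connected) (hdeg : ∀ v, G.degree v ≤ 3)
    (n r : ℕ)
    (hn : n = B.card)
    (hr : r = (B.filter fun v => G.degree v = 1).card)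
    (heq : 4 * r = 3 * (n + 1)) :
    G.IsTree ∧ (∀ v ∈ A, G.degree v = 3) ∧ (∀ v ∈ B, G.degree v = 3 ∨ G.degree v = 1) := by
  classical
  set E := G.edgeFinset.card with hE
  have hSB : ∑ v ∈ B, G.degree v = E := aux_sum_deg G A B hdisj hbip
  have hSA : ∑ v ∈ A, G.degree v = E := by
    apply aux_sum_deg G B A hdisj.symm
    intro u v huv
    exact (hbip u v huv).symm
  have hA3 : ∑ v ∈ A, G.degree v ≤ 3 * A.card := by
    calc ∑ v ∈ A, G.degree v ≤ ∑ _v ∈ A, 3 := Finset.sum_le_sum fun v _ => hdeg v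
      _ = 3 * A.card := by rw [Finset.sum_const, smul_eq_mul, mul_comm]
  set B1 := B.filter (fun v => G.degree v = 1) with hB1
  set B2 := B.filter (fun v => ¬ G.degree v = 1) with hB2
  have hsplitc : B1.card + B2.card = B.card := Finset.card_filter_add_card_filter_not _
  have hsplits : ∑ v ∈ B1, G.degree v + ∑ v ∈ B2, G.degree v = ∑ v ∈ B, G.degree v := by
    rw [hB1, hB2, Finset.sum_filter_add_sum_filter_not]
  have hS1 : ∑ v ∈ B1, G.degree v = B1.card := by
    rw [Finset.sum_congr rfl (fun v hv => (Finset.mem_filter.mp hv).2)]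
    simp
    rfl
  have hS2le : ∑ v ∈ B2, G.degree v ≤ 3 * B2.card := by
    calc ∑ v ∈ B2, G.degree v ≤ ∑ _v ∈ B2, 3 := Finset.sum_le_sum fun v _ => hdeg v
      _ = 3 * B2.card := by rw [Finset.sum_const, smul_eq_mul, mul_comm]
  have hcardV : A.card + B.card = Fintype.card V := by
    rw [← Finset.card_union_of_disjoint hdisj, hcover, Finset.card_univ]
  have hVle : Fintype.card V ≤ E + 1 := aux_card_le G hconn
  -- derive equalities
  have key1 : E + 1 = Fintype.card V := by omega
  have key2 : 3 * A.card ≤ ∑ v ∈ A, G.degree v := by omega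
  have key3 : 3 * B2.card ≤ ∑ v ∈ B2, G.degree v := by omega
  refine ⟨?_, ?_, ?_⟩
  · rw [SimpleGraph.isTree_iff]
    exact ⟨hconn, aux_acyclic G hconn (by omega)⟩
  · exact aux_all_three A _ (fun v _ => hdeg v) key2
  · intro v hv
    by_cases h1 : G.degree v = 1
    · exact Or.inr h1
    · exact Or.inl (aux_all_three B2 _ (fun v _ => hdeg v) key3 v
        (Finset.mem_filter.mpr ⟨hv, h1⟩))
end
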